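/- Let a, b, b′ ∈ ℂ and let A : ℤ × ℤ → ℂ satisfy (i/2 − j)·A(i + j, k) = (a − (k + j) + i·b′)·A(j, k) − (a − k + i·b)·A(j, i + k) for all i, j, k ∈ ℤ. If A(1, k) = 0 for all k ∈ ℤ, then A(i, k) = 0 for all i, k ∈ ℤ. -/
import Mathlib


/-- The intertwining relation satisfied by the coefficients of the odd operators
`G^±_j` acting between two Virasoro intermediate-series modules `A_{a,b}` and `A_{a,b′}`. -/
def IntertwiningRel (a b b' : ℂ) (A : ℤ → ℤ → ℂ) : Prop :=
  ∀ i j k : ℤ, ((i : ℂ) / 2 - (j : ℂ)) * A (i + j) k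
    = (a - ((k : ℂ) + (j : ℂ)) + (i : ℂ) * b') * A j k
      - (a - (k : ℂ) + (i : ℂ) * b) * A j (i + k)

theorem stmt_4 (a b b' : ℂ) (A : ℤ → ℤ → ℂ) (hA : IntertwiningRel a b b' A)
    (h1 : ∀ k : ℤ, A 1 k = 0) :
    ∀ i k : ℤ, A i k = 0 := by
  have h2 : ∀ m : ℤ, m ≠ 3 → ∀ k, A m k = 0 := by
    intro m hm k
    have h := hA (m - 1) 1 k
    rw [h1, h1] at h
    simp only [mul_zero, sub_zero] at h
    have hmk : m - 1 + 1 = m := by ring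
    rw [hmk] at h
    have hc : ((m - 1 : ℤ) : ℂ) / 2 - ((1 : ℤ) : ℂ) ≠ 0 := by
      intro hc0
      apply hm
      have : ((m : ℂ)) = 3 := by push_cast at hc0 ⊢; linear_combination 2 * hc0
      exact_mod_cast this
    exact (mul_eq_zero.mp h).resolve_left hc
  intro i k
  rcases eq_or_ne i 3 with rfl | hi
  · have h := hA 1 2 k
    rw [h2 2 (by decide) k, h2 2 (by decide) (1 + k)] at h
    simp only [mul_zero, sub_zero] at h
    norm_num at h
    exact h
  · exact h2 i hi k
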